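/- Define g(p) = sup over integers w ≥ 2 of -w·ln(1 - (1-p)^w), for p ∈ (0,1). Then p·g(p) → (ln 2)² as p → 0⁺. -/

import Mathlib

open Real Filter Set

section Aux

/-! ### The key pointwise inequality `log u * log (1-u) ≤ (log 2)^2` -/

noncomputable def dfun (u : ℝ) : ℝ := (1-u) * Real.log (1-u) - u * Real.log u
noncomputable def dfun' (u : ℝ) : ℝ := -Real.log (1-u) - Real.log u - 2

lemma hasDerivAt_dfun {u : ℝ} (h0 : 0 < u) (h1 : u < 1) : HasDerivAt dfun (dfun' u) u := by
  have h1u : (1:ℝ) - u ≠ 0 := by intro h; nlinarith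
  have hu0 : u ≠ 0 := ne_of_gt h0
  have hA : HasDerivAt (fun u : ℝ => (1-u) * Real.log (1-u))
      ((Real.log (1-u) + 1) * (-1)) u := by
    have := (Real.hasDerivAt_mul_log h1u).comp u (((hasDerivAt_id u).const_sub 1))
    simpa [Function.comp_def] using this
  have hB : HasDerivAt (fun u : ℝ => u * Real.log u) (Real.log u + 1) u :=
    Real.hasDerivAt_mul_log hu0
  have := hA.sub hB
  refine this.congr_deriv ?_
  unfold dfun'; ring

lemma deriv_dfun_eq : Set.EqOn (deriv dfun) dfun' (Set.Ioo 0 1) := fun u hu =>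
  (hasDerivAt_dfun hu.1 hu.2).deriv

lemma hasDerivAt_dfun' {u : ℝ} (h0 : 0 < u) (h1 : u < 1) :
    HasDerivAt dfun' ((1-u)⁻¹ - u⁻¹) u := by
  have h1u : (1:ℝ) - u ≠ 0 := by intro h; nlinarith
  have hu0 : u ≠ 0 := ne_of_gt h0
  have hA : HasDerivAt (fun u : ℝ => -Real.log (1-u)) ((1-u)⁻¹) u := by
    have := ((Real.hasDerivAt_log h1u).comp u (((hasDerivAt_id u).const_sub 1))).neg
    simpa [Function.comp_def, Pi.neg_def] using this
  have := (hA.sub (Real.hasDerivAt_log hu0)).sub_const 2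
  exact this

lemma dfun_nonneg {u : ℝ} (h0 : 0 ≤ u) (h1 : u ≤ 1/2) : 0 ≤ dfun u := by
  have hconc : ConcaveOn ℝ (Set.Icc (0:ℝ) (1/2)) dfun := by
    apply concaveOn_of_deriv2_nonpos (convex_Icc _ _)
    · have : Continuous dfun := by
        unfold dfun
        exact (Real.continuous_mul_log.comp (continuous_const.sub continuous_id)).sub
          Real.continuous_mul_log
      exact this.continuousOn
    · rw [interior_Icc]
      intro u hu
      exact (hasDerivAt_dfun hu.1 (by linarith [hu.2])).differentiableAt.differentiableWithinAt
    · rw [interior_Icc]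
      intro u hu
      have hmem : u ∈ Set.Ioo (0:ℝ) 1 := ⟨hu.1, by linarith [hu.2]⟩
      have heq : deriv dfun =ᶠ[nhds u] dfun' :=
        Filter.eventuallyEq_of_mem (isOpen_Ioo.mem_nhds hmem) deriv_dfun_eq
      exact (heq.differentiableAt_iff.mpr
        (hasDerivAt_dfun' hu.1 hmem.2).differentiableAt).differentiableWithinAt
    · rw [interior_Icc]
      intro u hu
      have hmem : u ∈ Set.Ioo (0:ℝ) 1 := ⟨hu.1, by linarith [hu.2]⟩
      have heq : deriv dfun =ᶠ[nhds u] dfun' :=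
        Filter.eventuallyEq_of_mem (isOpen_Ioo.mem_nhds hmem) deriv_dfun_eq
      have h2 : deriv (deriv dfun) u = (1-u)⁻¹ - u⁻¹ := by
        rw [heq.deriv_eq]
        exact (hasDerivAt_dfun' hu.1 hmem.2).deriv
      have h3 : deriv^[2] dfun u = (1-u)⁻¹ - u⁻¹ := by
        simpa [Function.iterate_succ, Function.comp] using h2
      rw [h3]
      have hu2 : u ≤ 1 - u := by linarith [hu.2]
      have hinv : (1-u)⁻¹ ≤ u⁻¹ := inv_anti₀ hu.1 hu2
      linarith
  have h0' : dfun 0 = 0 := by simp [dfun]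
  have h12 : dfun (1/2) = 0 := by norm_num [dfun]
  have key := hconc.2 (Set.left_mem_Icc.2 (by norm_num)) (Set.right_mem_Icc.2 (by norm_num))
    (show (0:ℝ) ≤ 1 - 2*u by linarith) (show (0:ℝ) ≤ 2*u by linarith)
    (show (1 - 2*u) + 2*u = 1 by ring)
  have harg : (1-2*u) • (0:ℝ) + (2*u) • (1/2:ℝ) = u := by
    simp [smul_eq_mul]; ring
  rw [harg, h0', h12] at key
  simpa using key

lemma key_half {u : ℝ} (h0 : 0 < u) (h1 : u ≤ 1/2) :
    Real.log u * Real.log (1-u) ≤ (Real.log 2)^2 := by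
  set f : ℝ → ℝ := fun u => Real.log u * Real.log (1-u) with hf
  have hmono : MonotoneOn f (Set.Ioc (0:ℝ) (1/2)) := by
    apply monotoneOn_of_deriv_nonneg (convex_Ioc _ _)
    · intro x hx
      have hx0 : x ≠ 0 := ne_of_gt hx.1
      have hx1 : (1:ℝ) - x ≠ 0 := by intro h; rcases hx with ⟨_, h2⟩; nlinarith
      exact ((Real.continuousAt_log hx0).mul
        ((Real.continuousAt_log hx1).comp (by fun_prop))).continuousWithinAt
    · rw [interior_Ioc]
      intro x hx
      have hx0 : x ≠ 0 := ne_of_gt hx.1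
      have hx1 : (1:ℝ) - x ≠ 0 := by intro h; rcases hx with ⟨_, h2⟩; nlinarith
      have hd : HasDerivAt f (x⁻¹ * Real.log (1-x) + Real.log x * ((1-x)⁻¹ * (-1))) x := by
        exact (Real.hasDerivAt_log hx0).mul
          ((Real.hasDerivAt_log hx1).comp x (((hasDerivAt_id x).const_sub 1)))
      exact hd.differentiableAt.differentiableWithinAt
    · rw [interior_Ioc]
      intro x hx
      have hx0' : 0 < x := hx.1
      have hx0 : x ≠ 0 := ne_of_gt hx0'
      have h1x' : 0 < 1 - x := by have := hx.2; linarith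
      have hx1 : (1:ℝ) - x ≠ 0 := ne_of_gt h1x'
      have hd : HasDerivAt f (x⁻¹ * Real.log (1-x) + Real.log x * ((1-x)⁻¹ * (-1))) x := by
        exact (Real.hasDerivAt_log hx0).mul
          ((Real.hasDerivAt_log hx1).comp x (((hasDerivAt_id x).const_sub 1)))
      rw [hd.deriv]
      have heq : x⁻¹ * Real.log (1-x) + Real.log x * ((1-x)⁻¹ * (-1))
          = ((1-x) * Real.log (1-x) - x * Real.log x) / (x * (1-x)) := by
        field_simp
        ring
      rw [heq]
      exact div_nonneg (dfun_nonneg (le_of_lt hx0') (le_of_lt hx.2)) (by positivity)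
  have hu : u ∈ Set.Ioc (0:ℝ) (1/2) := ⟨h0, h1⟩
  have h12 : (1/2 : ℝ) ∈ Set.Ioc (0:ℝ) (1/2) := ⟨by norm_num, le_refl _⟩
  have hle := hmono hu h12 h1
  have hval : f (1/2) = (Real.log 2)^2 := by
    have h' : (1:ℝ) - 1/2 = 1/2 := by norm_num
    simp only [hf, h']
    rw [show (1/2 : ℝ) = 2⁻¹ by norm_num, Real.log_inv]
    ring
  calc Real.log u * Real.log (1-u) = f u := rfl
    _ ≤ f (1/2) := hle
    _ = _ := hval

lemma key_ineq {u : ℝ} (h0 : 0 < u) (h1 : u < 1) :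
    Real.log u * Real.log (1-u) ≤ (Real.log 2)^2 := by
  rcases le_or_gt u (1/2) with h | h
  · exact key_half h0 h
  · have h' : 0 < 1 - u := by linarith
    have := key_half h' (by linarith)
    rw [show (1:ℝ) - (1-u) = u by ring] at this
    linarith [this]

end Aux

/-- `g p` is the supremum over integers `w ≥ 2` of `-w·ln(1 - (1-p)^w)`,
appearing in the lower bound for conservative two-stage group testing. -/
noncomputable def conservativeBoundG (p : ℝ) : ℝ :=
  ⨆ w : {w : ℕ // 2 ≤ w}, -((w : ℕ) : ℝ) * Real.log (1 - (1 - p) ^ (w : ℕ))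

section Bounds

lemma term_bound {p : ℝ} (hp0 : 0 < p) (hp1 : p < 1) {w : ℕ} (hw : 1 ≤ w) :
    p * (-(w:ℝ) * Real.log (1 - (1-p)^w)) ≤ (Real.log 2)^2 := by
  have hq0 : 0 < 1 - p := by linarith
  have hq1 : 1 - p < 1 := by linarith
  set u : ℝ := (1-p)^w with hu
  have hu0 : 0 < u := pow_pos hq0 w
  have hu1 : u < 1 := pow_lt_one₀ (le_of_lt hq0) hq1 (by omega)
  have hlogq : Real.log (1-p) < 0 := Real.log_neg hq0 hq1
  have hlogu : Real.log u = (w:ℝ) * Real.log (1-p) := by rw [hu, Real.log_pow]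
  have hple : p ≤ -Real.log (1-p) := by
    rw [le_neg]
    have h := Real.add_one_le_exp (-p)
    have h2 : 1 - p ≤ Real.exp (-p) := by linarith
    calc Real.log (1-p) ≤ Real.log (Real.exp (-p)) :=
          Real.log_le_log (by linarith) h2
      _ = -p := Real.log_exp _
  have hterm : p * (-(w:ℝ) * Real.log (1 - u))
      = (Real.log u * Real.log (1-u)) * (p / (-Real.log (1-p))) := by
    rw [hlogu]
    field_simp
    rw [mul_div_assoc, div_self (ne_of_lt hlogq), mul_one]
  rw [hterm]
  have hprod0 : 0 ≤ Real.log u * Real.log (1-u) := by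
    have h1 : Real.log u ≤ 0 := Real.log_nonpos (le_of_lt hu0) (le_of_lt hu1)
    have h2 : Real.log (1-u) ≤ 0 := Real.log_nonpos (by linarith) (by linarith)
    nlinarith [mul_nonneg (neg_nonneg.2 h1) (neg_nonneg.2 h2)]
  have hdiv1 : p / (-Real.log (1-p)) ≤ 1 := by
    rw [div_le_one (by linarith)]
    exact hple
  calc (Real.log u * Real.log (1-u)) * (p / (-Real.log (1-p)))
      ≤ (Real.log 2)^2 * 1 :=
        mul_le_mul (key_ineq hu0 hu1) hdiv1 (le_of_lt (div_pos hp0 (by linarith)))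
          (by positivity)
    _ = _ := mul_one _

instance : Nonempty {w : ℕ // 2 ≤ w} := ⟨⟨2, le_refl 2⟩⟩

lemma bddAbove_range {p : ℝ} (hp0 : 0 < p) (hp1 : p < 1) :
    BddAbove (Set.range fun w : {w : ℕ // 2 ≤ w} =>
      -((w : ℕ) : ℝ) * Real.log (1 - (1 - p) ^ (w : ℕ))) := by
  refine ⟨(Real.log 2)^2 / p, ?_⟩
  rintro x ⟨w, rfl⟩
  dsimp only
  rw [le_div_iff₀ hp0]
  have := term_bound hp0 hp1 (w := (w:ℕ)) (by omega)
  linarith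

lemma upper_bound {p : ℝ} (hp0 : 0 < p) (hp1 : p < 1) :
    p * conservativeBoundG p ≤ (Real.log 2)^2 := by
  have hG : conservativeBoundG p ≤ (Real.log 2)^2 / p := by
    apply ciSup_le
    intro w
    rw [le_div_iff₀ hp0]
    have := term_bound hp0 hp1 (w := (w:ℕ)) (by omega)
    linarith
  calc p * conservativeBoundG p ≤ p * ((Real.log 2)^2 / p) :=
        mul_le_mul_of_nonneg_left hG (le_of_lt hp0)
    _ = (Real.log 2)^2 := by field_simp

lemma lower_bound {p : ℝ} (hp0 : 0 < p) (hp1 : p < 1) {w : ℕ} (hw : 2 ≤ w) :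
    p * (-(w:ℝ) * Real.log (1 - (1-p)^w)) ≤ p * conservativeBoundG p := by
  apply mul_le_mul_of_nonneg_left _ (le_of_lt hp0)
  exact le_ciSup (bddAbove_range hp0 hp1) ⟨w, hw⟩

end Bounds

section Tendsto

noncomputable def W (p : ℝ) : ℕ := ⌈Real.log 2 / p⌉₊

lemma hA1 : Tendsto (fun p : ℝ => p * (W p : ℝ)) (nhdsWithin 0 (Set.Ioi 0))
    (nhds (Real.log 2)) := by
  have hlow : ∀ᶠ p in nhdsWithin (0:ℝ) (Set.Ioi 0), Real.log 2 ≤ p * (W p : ℝ) := by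
    filter_upwards [self_mem_nhdsWithin] with p (hp : (0:ℝ) < p)
    have h := Nat.le_ceil (Real.log 2 / p)
    have := mul_le_mul_of_nonneg_left h (le_of_lt hp)
    rwa [mul_div_cancel₀ _ (ne_of_gt hp)] at this
  have hhigh : ∀ᶠ p in nhdsWithin (0:ℝ) (Set.Ioi 0), p * (W p : ℝ) ≤ Real.log 2 + p := by
    filter_upwards [self_mem_nhdsWithin] with p (hp : (0:ℝ) < p)
    have h0 : (0:ℝ) ≤ Real.log 2 / p := div_nonneg (Real.log_nonneg (by norm_num)) (le_of_lt hp)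
    have h := (Nat.ceil_lt_add_one h0).le
    have := mul_le_mul_of_nonneg_left h (le_of_lt hp)
    rw [mul_add, mul_one, mul_div_cancel₀ _ (ne_of_gt hp)] at this
    exact this
  have h2 : Tendsto (fun p : ℝ => Real.log 2 + p) (nhdsWithin 0 (Set.Ioi 0))
      (nhds (Real.log 2)) := by
    have hc : Continuous (fun p : ℝ => Real.log 2 + p) := by fun_prop
    have := (hc.tendsto (0:ℝ)).mono_left (nhdsWithin_le_nhds (s := Set.Ioi (0:ℝ)))
    simpa using this
  exact tendsto_of_tendsto_of_tendsto_of_le_of_le' tendsto_const_nhds h2 hlow hhigh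

lemma hslope : Tendsto (fun p : ℝ => Real.log (1-p) / p) (nhdsWithin 0 (Set.Ioi 0))
    (nhds (-1)) := by
  have hD : HasDerivAt (fun p : ℝ => Real.log (1-p)) (-1) 0 := by
    have := (Real.hasDerivAt_log (by norm_num : (1:ℝ)-0 ≠ 0)).comp 0
      ((hasDerivAt_id (0:ℝ)).const_sub 1)
    simpa [Function.comp_def] using this
  rw [hasDerivAt_iff_tendsto_slope] at hD
  have hmono : nhdsWithin (0:ℝ) (Set.Ioi 0) ≤ nhdsWithin 0 {(0:ℝ)}ᶜ :=
    nhdsWithin_mono 0 (fun x hx => ne_of_gt hx)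
  refine (hD.mono_left hmono).congr' ?_
  filter_upwards [self_mem_nhdsWithin] with p (hp : (0:ℝ) < p)
  simp [slope_def_field, Real.log_one]

lemma hA2 : Tendsto (fun p : ℝ => (W p : ℝ) * Real.log (1-p)) (nhdsWithin 0 (Set.Ioi 0))
    (nhds (-Real.log 2)) := by
  have h := hA1.mul hslope
  have heq : (fun p : ℝ => (p * (W p : ℝ)) * (Real.log (1-p) / p))
      =ᶠ[nhdsWithin (0:ℝ) (Set.Ioi 0)] (fun p : ℝ => (W p : ℝ) * Real.log (1-p)) := by
    filter_upwards [self_mem_nhdsWithin] with p (hp : (0:ℝ) < p)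
    field_simp
  have := h.congr' heq
  rwa [mul_neg_one] at this

lemma hA4 : Tendsto (fun p : ℝ => Real.log (1 - (1-p) ^ (W p)))
    (nhdsWithin 0 (Set.Ioi 0)) (nhds (-Real.log 2)) := by
  have h3 : Tendsto (fun p : ℝ => (1-p) ^ (W p)) (nhdsWithin 0 (Set.Ioi 0))
      (nhds (1/2 : ℝ)) := by
    have hexp : Tendsto (fun p : ℝ => Real.exp ((W p : ℝ) * Real.log (1-p)))
        (nhdsWithin 0 (Set.Ioi 0)) (nhds (Real.exp (-Real.log 2))) :=
      (Real.continuous_exp.tendsto _).comp hA2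
    have hval : Real.exp (-Real.log 2) = 1/2 := by
      rw [Real.exp_neg, Real.exp_log (by norm_num : (0:ℝ) < 2)]
      norm_num
    rw [hval] at hexp
    refine hexp.congr' ?_
    filter_upwards [Ioo_mem_nhdsGT_of_mem (by norm_num : (0:ℝ) ∈ Set.Ico (0:ℝ) 1)]
      with p hp
    have h1p : (0:ℝ) < 1 - p := by have := hp.2; linarith
    rw [Real.exp_nat_mul, Real.exp_log h1p]
  have hcont : Tendsto (fun x : ℝ => Real.log (1 - x)) (nhds (1/2 : ℝ))
      (nhds (-Real.log 2)) := by
    have hca : ContinuousAt (fun x : ℝ => Real.log (1 - x)) (1/2) := by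
      apply (Real.continuousAt_log (by norm_num)).comp
      fun_prop
    have h := hca.tendsto
    have hval : Real.log (1 - 1/2 : ℝ) = -Real.log 2 := by
      rw [show (1:ℝ) - 1/2 = 2⁻¹ by norm_num, Real.log_inv]
    rwa [hval] at h
  exact hcont.comp h3

end Tendsto

/-- `p·g(p) → (ln 2)²` as `p → 0⁺`. -/
theorem g_asymptotic :
    Filter.Tendsto (fun p : ℝ => p * conservativeBoundG p)
      (nhdsWithin 0 (Set.Ioi 0)) (nhds ((Real.log 2) ^ 2)) := by
  have hL : Tendsto (fun p : ℝ => (p * (W p : ℝ)) * (-Real.log (1 - (1-p) ^ (W p))))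
      (nhdsWithin 0 (Set.Ioi 0)) (nhds ((Real.log 2)^2)) := by
    have := hA1.mul hA4.neg
    rw [neg_neg, ← pow_two] at this
    exact this
  have hlow : ∀ᶠ p in nhdsWithin (0:ℝ) (Set.Ioi 0),
      (p * (W p : ℝ)) * (-Real.log (1 - (1-p) ^ (W p))) ≤ p * conservativeBoundG p := by
    filter_upwards [Ioo_mem_nhdsGT_of_mem (by norm_num : (0:ℝ) ∈ Set.Ico (0:ℝ) (1/4))]
      with p hp
    have hp0 : 0 < p := hp.1
    have hp1 : p < 1 := by have := hp.2; linarith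
    have hW2 : 2 ≤ W p := by
      have : 1 < W p := by
        unfold W
        rw [Nat.lt_ceil]
        have hlog2 : (0.6931471803 : ℝ) < Real.log 2 := Real.log_two_gt_d9
        rw [show ((1:ℕ):ℝ) = 1 by norm_num, lt_div_iff₀ hp0]
        have := hp.2
        nlinarith
      omega
    have := lower_bound hp0 hp1 hW2
    calc (p * (W p : ℝ)) * (-Real.log (1 - (1-p) ^ (W p)))
        = p * (-(W p : ℝ) * Real.log (1 - (1-p) ^ (W p))) := by ring
      _ ≤ p * conservativeBoundG p := this
  have hupp : ∀ᶠ p in nhdsWithin (0:ℝ) (Set.Ioi 0),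
      p * conservativeBoundG p ≤ (Real.log 2)^2 := by
    filter_upwards [Ioo_mem_nhdsGT_of_mem (by norm_num : (0:ℝ) ∈ Set.Ico (0:ℝ) 1)]
      with p hp
    exact upper_bound hp.1 hp.2
  exact tendsto_of_tendsto_of_tendsto_of_le_of_le' hL tendsto_const_nhds hlow hupp
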